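/- Let ℓ, b ∈ ℕ with a < ℓ(ℓ+1)/2, let p be the (b+ℓ)-th prime, and let n be a natural number with ω(n) = b and n > p². Then φ̃(n) > a. -/

import Mathlib

/-- φ̃(n): number of m with 1 ≤ m ≤ n, gcd(m,n)=1, m not prime. -/
def phiT (n : ℕ) : ℕ :=
  ((Finset.Icc 1 n).filter (fun m => Nat.gcd m n = 1 ∧ ¬ m.Prime)).card

/-- The product of the first k primes. -/
noncomputable def primorialN (k : ℕ) : ℕ := ∏ i ∈ Finset.range k, Nat.nth Nat.Prime i

lemma prime_mul_eq_aux {a b c d : ℕ} (hab : a ≤ b) (hcd : c ≤ d)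
    (hpa : a.Prime) (hpb : b.Prime) (hpc : c.Prime) (hpd : d.Prime)
    (h : a * b = c * d) : a = c ∧ b = d := by
  have hc : c ∣ a * b := ⟨d, h⟩
  rcases (Nat.Prime.dvd_mul hpc).1 hc with h1 | h1
  · have hac : a = c := ((Nat.prime_dvd_prime_iff_eq hpc hpa).1 h1).symm
    subst hac
    exact ⟨rfl, Nat.eq_of_mul_eq_mul_left hpa.pos h⟩
  · have hbc : c = b := (Nat.prime_dvd_prime_iff_eq hpc hpb).1 h1
    have had : a = d := by
      apply Nat.eq_of_mul_eq_mul_left hpb.pos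
      rw [mul_comm b a, h, hbc]
    omega

theorem stmt12 (a l b n : ℕ) (ha : a < l * (l + 1) / 2)
    (hω : n.primeFactors.card = b)
    (hn : n > (Nat.nth Nat.Prime (b + l - 1)) ^ 2) : phiT n > a := by
  have hinf : (setOf Nat.Prime).Infinite := Nat.infinite_setOf_prime
  rcases Nat.eq_zero_or_pos l with rfl | hl
  · simp at ha
  have hp2 : 2 ≤ Nat.nth Nat.Prime (b + l - 1) := (Nat.prime_nth_prime _).two_le
  have hn0 : n ≠ 0 := by nlinarith
  set P : Finset ℕ := (Finset.range (b + l)).image (Nat.nth Nat.Prime) with hP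
  have hnthinj : Function.Injective (Nat.nth Nat.Prime) := Nat.nth_injective hinf
  have hPcard : P.card = b + l := by
    rw [hP, Finset.card_image_of_injective _ hnthinj, Finset.card_range]
  set S : Finset ℕ := P.filter (fun q => ¬ q ∣ n) with hSdef
  have hSsub : ∀ x ∈ S, x.Prime ∧ ¬ x ∣ n ∧ x ≤ Nat.nth Nat.Prime (b + l - 1) := by
    intro x hx
    rw [hSdef, Finset.mem_filter] at hx
    obtain ⟨hxP, hxn⟩ := hx
    rw [hP, Finset.mem_image] at hxP
    obtain ⟨i, hi, rfl⟩ := hxP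
    rw [Finset.mem_range] at hi
    exact ⟨Nat.prime_nth_prime i, hxn, (Nat.nth_le_nth hinf).2 (by omega)⟩
  have hScard : l ≤ S.card := by
    have hsub : P.filter (fun q => q ∣ n) ⊆ n.primeFactors := by
      intro x hx
      rw [Finset.mem_filter] at hx
      obtain ⟨hxP, hxn⟩ := hx
      rw [hP, Finset.mem_image] at hxP
      obtain ⟨i, _, rfl⟩ := hxP
      exact Nat.mem_primeFactors.2 ⟨Nat.prime_nth_prime i, hxn, hn0⟩
    have h1 : (P.filter (fun q => q ∣ n)).card ≤ b := hω ▸ Finset.card_le_card hsub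
    have h2 := Finset.card_filter_add_card_filter_not (s := P)
      (p := fun q => q ∣ n)
    rw [hSdef]
    omega
  obtain ⟨S', hS'sub, hS'card⟩ := Finset.exists_subset_card_eq hScard
  set q : Fin l ↪o ℕ := S'.orderEmbOfFin hS'card with hq
  have hqS : ∀ i, q i ∈ S := fun i => hS'sub (Finset.orderEmbOfFin_mem S' hS'card i)
  set f : ℕ → ℕ := fun j => if h : j < l then q ⟨j, h⟩ else 0 with hf
  set A : Finset ((_ : ℕ) × ℕ) := (Finset.range l).sigma (fun j => Finset.range (j + 1)) with hA
  have hAcard : A.card * 2 = l * (l + 1) := by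
    rw [hA, Finset.card_sigma]
    simp only [Finset.card_range]
    have h3 : ∑ j ∈ Finset.range l, (j + 1) = ∑ i ∈ Finset.range (l + 1), i := by
      rw [Finset.sum_range_succ' (fun i => i) l]
      simp
    rw [h3, Finset.sum_range_id_mul_two, Nat.add_sub_cancel]
    ring
  have hmem : ∀ x ∈ A, (x.2 < l ∧ x.1 < l ∧ x.2 ≤ x.1) := by
    intro x hx
    rw [hA, Finset.mem_sigma, Finset.mem_range, Finset.mem_range] at hx
    omega
  have hfval : ∀ (j : ℕ) (h : j < l), f j = q ⟨j, h⟩ := by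
    intro j h; rw [hf]; simp [h]
  have key : A.card ≤ phiT n := by
    unfold phiT
    apply Finset.card_le_card_of_injOn (fun x => f x.2 * f x.1)
    · intro x hx
      obtain ⟨hi, hj, hij⟩ := hmem x hx
      obtain ⟨hp1, hd1, hle1⟩ := hSsub _ (hqS ⟨x.1, hj⟩)
      obtain ⟨hp2', hd2, hle2⟩ := hSsub _ (hqS ⟨x.2, hi⟩)
      simp only [Finset.mem_coe]
      rw [hfval x.2 hi, hfval x.1 hj]
      rw [Finset.mem_filter, Finset.mem_Icc]
      refine ⟨⟨?_, ?_⟩, ?_, ?_⟩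
      · exact Nat.one_le_iff_ne_zero.2 (Nat.mul_ne_zero hp2'.pos.ne' hp1.pos.ne')
      · calc (q ⟨x.2, hi⟩ : ℕ) * q ⟨x.1, hj⟩
            ≤ Nat.nth Nat.Prime (b + l - 1) * Nat.nth Nat.Prime (b + l - 1) :=
              Nat.mul_le_mul hle2 hle1
          _ = Nat.nth Nat.Prime (b + l - 1) ^ 2 := (sq _).symm
          _ ≤ n := le_of_lt hn
      · exact Nat.Coprime.mul ((Nat.Prime.coprime_iff_not_dvd hp2').2 hd2)
          ((Nat.Prime.coprime_iff_not_dvd hp1).2 hd1)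
      · intro hpr
        rcases (Nat.prime_mul_iff.1 hpr) with ⟨_, h1⟩ | ⟨_, h1⟩
        · exact hp1.one_lt.ne' h1
        · exact hp2'.one_lt.ne' h1
    · intro x hx y hy heq
      obtain ⟨hxi, hxj, hxij⟩ := hmem x hx
      obtain ⟨hyi, hyj, hyij⟩ := hmem y hy
      simp only [hfval x.2 hxi, hfval x.1 hxj, hfval y.2 hyi, hfval y.1 hyj] at heq
      obtain ⟨hpx1, _, _⟩ := hSsub _ (hqS ⟨x.1, hxj⟩)
      obtain ⟨hpx2, _, _⟩ := hSsub _ (hqS ⟨x.2, hxi⟩)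
      obtain ⟨hpy1, _, _⟩ := hSsub _ (hqS ⟨y.1, hyj⟩)
      obtain ⟨hpy2, _, _⟩ := hSsub _ (hqS ⟨y.2, hyi⟩)
      have hmx : (q ⟨x.2, hxi⟩ : ℕ) ≤ q ⟨x.1, hxj⟩ := q.monotone (by simpa using hxij)
      have hmy : (q ⟨y.2, hyi⟩ : ℕ) ≤ q ⟨y.1, hyj⟩ := q.monotone (by simpa using hyij)
      obtain ⟨he2, he1⟩ := prime_mul_eq_aux hmx hmy hpx2 hpx1 hpy2 hpy1 heq
      have h1 : x.1 = y.1 := by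
        have := q.injective (he1 : q ⟨x.1, hxj⟩ = q ⟨y.1, hyj⟩)
        exact congrArg Fin.val this
      have h2 : x.2 = y.2 := by
        have := q.injective (he2 : q ⟨x.2, hxi⟩ = q ⟨y.2, hyi⟩)
        exact congrArg Fin.val this
      exact Sigma.ext h1 (heq_of_eq h2)
  have := Nat.div_mul_le_self (l * (l + 1)) 2
  omega
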